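/- Let h₀: ℝ → ℝ ∪ {−∞} be a t₀-finitary initial condition: h₀ ≢ −∞, h₀ is bounded above on compacts, and (h₀(x) − x²/t₀)/|x| → −∞ as |x| → ∞. Suppose L: ℝ × ℝ → ℝ satisfies the growth bound |L(x,y) + (x−y)²/t| ≤ C(1 + |x|^{1/5} + |y|^{1/5}) for all x,y, for a constant C and fixed t ∈ (0,t₀]. Then h_t(y) := sup_{x∈ℝ} ( L(x,y) + h₀(x) ) is finite for every y ∈ ℝ, and for any compact K ⊂ ℝ there is a compact interval [L₀,R₀] (depending on C, K, t₀) such that h_t(y) = sup_{x∈[L₀,R₀]} ( L(x,y) + h₀(x) ) for all y ∈ K. -/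

import Mathlib

private lemma stmt17_rpow_le (z : ℝ) (hz : 0 ≤ z) : z ^ ((1:ℝ)/5) ≤ 1 + z := by
  rcases le_or_gt z 1 with h | h
  · have := Real.rpow_le_one hz h (by norm_num : (0:ℝ) ≤ 1/5); linarith
  · have := Real.rpow_le_rpow_of_exponent_le h.le (by norm_num : (1:ℝ)/5 ≤ 1)
    rw [Real.rpow_one] at this; linarith

/-- Deterministic localization lemma for the KPZ fixed point variational formula.
`h₀ : ℝ → ℝ ∪ {−∞}` is a `t₀`-finitary initial condition (not identically `−∞`, never
`+∞`, bounded above on compacts, with `(h₀(x) − x²/t₀)/|x| → −∞` as `|x| → ∞`, stated in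
its equivalent epsilon form), and `L` satisfies the directed-landscape growth bound
`|L(x,y) + (x−y)²/t| ≤ C(1 + |x|^{1/5} + |y|^{1/5})` for a fixed `t ∈ (0,t₀]`. Then
`h_t(y) = sup_x (L(x,y) + h₀(x))` is finite for every `y`, and for every compact `K`
there is a compact interval `[a,b]` on which the supremum may be taken, uniformly over
`y ∈ K`. -/
theorem stmt17 (t₀ t C : ℝ) (ht₀ : 0 < t₀) (ht : 0 < t) (htt₀ : t ≤ t₀) (hC : 0 ≤ C)
    (h₀ : ℝ → EReal) (hne : ∃ x, h₀ x ≠ ⊥) (htop : ∀ x, h₀ x ≠ ⊤)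
    (hbdd : ∀ M : ℝ, ∃ D : ℝ, ∀ x ∈ Set.Icc (-M) M, h₀ x ≤ (D : EReal))
    (hdecay : ∀ R : ℝ, ∃ M : ℝ, ∀ x : ℝ, M ≤ |x| →
      h₀ x ≤ ((x ^ 2 / t₀ - R * |x| : ℝ) : EReal))
    (L : ℝ → ℝ → ℝ)
    (hL : ∀ x y : ℝ, |L x y + (x - y) ^ 2 / t| ≤
      C * (1 + |x| ^ ((1 : ℝ) / 5) + |y| ^ ((1 : ℝ) / 5))) :
    (∀ y : ℝ, sSup (Set.range fun x => ((L x y : ℝ) : EReal) + h₀ x) ≠ ⊤ ∧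
      sSup (Set.range fun x => ((L x y : ℝ) : EReal) + h₀ x) ≠ ⊥) ∧
    (∀ K : Set ℝ, IsCompact K → ∃ a b : ℝ, a ≤ b ∧ ∀ y ∈ K,
      sSup (Set.range fun x => ((L x y : ℝ) : EReal) + h₀ x) =
        sSup ((fun x => ((L x y : ℝ) : EReal) + h₀ x) '' Set.Icc a b)) := by
  obtain ⟨x₀, hx₀⟩ := hne
  set v : ℝ := (h₀ x₀).toReal with hv
  have hx₀v : h₀ x₀ = (v : EReal) := (EReal.coe_toReal (htop x₀) hx₀).symm
  -- key quantitative claim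
  have key : ∀ Y : ℝ, 0 ≤ Y → ∃ N : ℝ, |x₀| ≤ N ∧
      (∃ b : ℝ, ∀ y, |y| ≤ Y → ∀ x, ((L x y : ℝ) : EReal) + h₀ x ≤ (b : EReal)) ∧
      (∀ y, |y| ≤ Y → ∀ x, N < |x| →
        ((L x y : ℝ) : EReal) + h₀ x ≤ ((L x₀ y : ℝ) : EReal) + h₀ x₀) := by
    intro Y hY
    set R : ℝ := 2 * Y / t₀ + C + 1 with hR
    obtain ⟨M, hM⟩ := hdecay R
    set B : ℝ := -((|x₀| + Y) ^ 2 / t) - C * (3 + |x₀| + Y) + v with hB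
    set N : ℝ := max (max M |x₀|) (C * (3 + Y) - B) with hN
    have hNx₀ : |x₀| ≤ N := le_trans (le_max_right _ _) (le_max_left _ _)
    -- real upper bound in the tail
    have hub : ∀ y, |y| ≤ Y → ∀ x : ℝ, M ≤ |x| →
        L x y + (x ^ 2 / t₀ - R * |x|) ≤ -|x| + C * (3 + Y) := by
      intro y hy x _
      have hL' := (abs_le.mp (hL x y)).2
      have e1 : |x| ^ ((1:ℝ)/5) ≤ 1 + |x| := stmt17_rpow_le _ (abs_nonneg x)
      have e2 : |y| ^ ((1:ℝ)/5) ≤ 1 + Y :=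
        (stmt17_rpow_le _ (abs_nonneg y)).trans (by linarith)
      have e3 : (x - y) ^ 2 / t₀ ≤ (x - y) ^ 2 / t := by
        gcongr
      have e4 : x * y ≤ |x| * Y := (le_abs_self _).trans (by
        rw [abs_mul]; exact mul_le_mul_of_nonneg_left hy (abs_nonneg x))
      have eC : C * (1 + |x| ^ ((1:ℝ)/5) + |y| ^ ((1:ℝ)/5)) ≤ C * (3 + |x| + Y) :=
        mul_le_mul_of_nonneg_left (by linarith) hC
      have e5 : (2 * x * y - y ^ 2) / t₀ ≤ 2 * |x| * Y / t₀ := by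
        apply div_le_div_of_nonneg_right ?_ ht₀.le
        nlinarith [sq_nonneg y]
      have e6 : -((x - y) ^ 2 / t₀) + x ^ 2 / t₀ = (2 * x * y - y ^ 2) / t₀ := by ring
      have e7 : R * |x| = 2 * |x| * Y / t₀ + C * |x| + |x| := by rw [hR]; ring
      have e8 : C * (3 + |x| + Y) = C * (3 + Y) + C * |x| := by ring
      linarith
    -- real lower bound at the witness point
    have hlb : ∀ y, |y| ≤ Y → B ≤ L x₀ y + v := by
      intro y hy
      have hL' := (abs_le.mp (hL x₀ y)).1
      have e1 : |x₀| ^ ((1:ℝ)/5) ≤ 1 + |x₀| := stmt17_rpow_le _ (abs_nonneg x₀)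
      have e2 : |y| ^ ((1:ℝ)/5) ≤ 1 + Y :=
        (stmt17_rpow_le _ (abs_nonneg y)).trans (by linarith)
      have eC : C * (1 + |x₀| ^ ((1:ℝ)/5) + |y| ^ ((1:ℝ)/5)) ≤ C * (3 + |x₀| + Y) :=
        mul_le_mul_of_nonneg_left (by linarith) hC
      have htri : |x₀ - y| ≤ |x₀| + Y := (abs_sub x₀ y).trans (by linarith)
      have e3 : (x₀ - y) ^ 2 / t ≤ (|x₀| + Y) ^ 2 / t := by
        apply div_le_div_of_nonneg_right ?_ ht.le
        nlinarith [abs_nonneg (x₀ - y), sq_abs (x₀ - y)]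
      rw [hB]; linarith
    refine ⟨N, hNx₀, ?_, ?_⟩
    · -- global upper bound
      set M' : ℝ := max M 0 with hM'
      obtain ⟨D, hD⟩ := hbdd M'
      refine ⟨max (C * (3 + M' + Y) + D) (C * (3 + Y)), fun y hy x => ?_⟩
      rcases le_or_gt |x| M' with hx | hx
      · have hLx : L x y ≤ C * (3 + M' + Y) := by
          have hL' := (abs_le.mp (hL x y)).2
          have e1 : |x| ^ ((1:ℝ)/5) ≤ 1 + M' :=
            (stmt17_rpow_le _ (abs_nonneg x)).trans (by linarith)
          have e2 : |y| ^ ((1:ℝ)/5) ≤ 1 + Y :=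
            (stmt17_rpow_le _ (abs_nonneg y)).trans (by linarith)
          have eC : C * (1 + |x| ^ ((1:ℝ)/5) + |y| ^ ((1:ℝ)/5)) ≤ C * (3 + M' + Y) :=
            mul_le_mul_of_nonneg_left (by linarith) hC
          have e3 : 0 ≤ (x - y) ^ 2 / t := div_nonneg (sq_nonneg _) ht.le
          linarith
        have hDx : h₀ x ≤ (D : EReal) := hD x (abs_le.mp hx)
        calc ((L x y : ℝ) : EReal) + h₀ x ≤ ((L x y : ℝ) : EReal) + (D : EReal) :=
              add_le_add le_rfl hDx
          _ = ((L x y + D : ℝ) : EReal) := by rw [EReal.coe_add]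
          _ ≤ ((max (C * (3 + M' + Y) + D) (C * (3 + Y)) : ℝ) : EReal) := by
              exact_mod_cast le_trans (by linarith) (le_max_left _ _)
      · have hxM : M ≤ |x| := le_trans (le_max_left _ _) hx.le
        calc ((L x y : ℝ) : EReal) + h₀ x
            ≤ ((L x y : ℝ) : EReal) + ((x ^ 2 / t₀ - R * |x| : ℝ) : EReal) :=
              add_le_add le_rfl (hM x hxM)
          _ = ((L x y + (x ^ 2 / t₀ - R * |x|) : ℝ) : EReal) := by rw [EReal.coe_add]
          _ ≤ ((max (C * (3 + M' + Y) + D) (C * (3 + Y)) : ℝ) : EReal) := by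
              have := hub y hy x hxM
              have hx0 : 0 ≤ |x| := abs_nonneg x
              exact_mod_cast le_trans (by linarith) (le_max_right _ _)
    · -- tail domination by the value at x₀
      intro y hy x hx
      have hxM : M ≤ |x| := le_trans (le_trans (le_max_left _ _) (le_max_left _ _)) hx.le
      have hxB : C * (3 + Y) - B ≤ |x| := le_trans (le_max_right _ _) hx.le
      calc ((L x y : ℝ) : EReal) + h₀ x
          ≤ ((L x y : ℝ) : EReal) + ((x ^ 2 / t₀ - R * |x| : ℝ) : EReal) :=
            add_le_add le_rfl (hM x hxM)
        _ = ((L x y + (x ^ 2 / t₀ - R * |x|) : ℝ) : EReal) := by rw [EReal.coe_add]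
        _ ≤ ((L x₀ y + v : ℝ) : EReal) := by
            have h1 := hub y hy x hxM
            have h2 := hlb y hy
            exact_mod_cast by linarith
        _ = ((L x₀ y : ℝ) : EReal) + h₀ x₀ := by rw [hx₀v, EReal.coe_add]
  constructor
  · intro y
    obtain ⟨N, _, ⟨b, hb⟩, _⟩ := key |y| (abs_nonneg y)
    constructor
    · have hle : sSup (Set.range fun x => ((L x y : ℝ) : EReal) + h₀ x) ≤ (b : EReal) := by
        apply sSup_le; rintro _ ⟨x, rfl⟩; exact hb y le_rfl x
      exact (hle.trans_lt (EReal.coe_lt_top b)).ne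
    · have hge : ((L x₀ y + v : ℝ) : EReal) ≤
          sSup (Set.range fun x => ((L x y : ℝ) : EReal) + h₀ x) := by
        have : ((L x₀ y + v : ℝ) : EReal) = ((L x₀ y : ℝ) : EReal) + h₀ x₀ := by
          rw [hx₀v, EReal.coe_add]
        rw [this]; exact le_sSup ⟨x₀, rfl⟩
      exact ((EReal.bot_lt_coe _).trans_le hge).ne'
  · intro K hK
    obtain ⟨r, hr⟩ := hK.isBounded.subset_closedBall 0
    have hYK : ∀ y ∈ K, |y| ≤ max r 0 := by
      intro y hy
      have := hr hy
      rw [Metric.mem_closedBall, Real.dist_eq, sub_zero] at this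
      exact this.trans (le_max_left _ _)
    obtain ⟨N, hNx₀, _, htail⟩ := key (max r 0) (le_max_right _ _)
    have hN0 : 0 ≤ N := (abs_nonneg x₀).trans hNx₀
    refine ⟨-N, N, by linarith, fun y hy => ?_⟩
    have hx₀mem : x₀ ∈ Set.Icc (-N) N := by
      constructor <;> [linarith [neg_abs_le x₀]; exact (le_abs_self x₀).trans hNx₀]
    apply le_antisymm
    · apply sSup_le
      rintro _ ⟨x, rfl⟩
      rcases le_or_gt |x| N with hx | hx
      · exact le_sSup ⟨x, abs_le.mp hx, rfl⟩
      · exact le_trans (htail y (hYK y hy) x hx) (le_sSup ⟨x₀, hx₀mem, rfl⟩)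
    · exact sSup_le_sSup (Set.image_subset_range _ _)
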